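/- arXiv:2507.13203 — 2 statements merged into one kernel-verified Lean document; each statement's English description precedes it below -/
import Mathlib

section
/- Let χ : ℤ → ZMod 2 be a function and let S ⊆ ℤ be a nonempty finite set such that for every k ∈ ℤ, the sum over n ∈ S of χ(n - k) equals 0 in ZMod 2. Then χ is periodic, i.e., there exists p > 0 such that χ(n + p) = χ(n) for all n ∈ ℤ. -/
theorem stmt_0 (χ : ℤ → ZMod 2) (S : Finset ℤ) (hS : S.Nonempty)
    (h : ∀ k : ℤ, ∑ n ∈ S, χ (n - k) = 0) :
    ∃ p : ℤ, 0 < p ∧ ∀ n : ℤ, χ (n + p) = χ n := by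
  set M := S.max' hS with hMdef
  set m := S.min' hS with hmdef
  have hM : M ∈ S := S.max'_mem hS
  have hm : m ∈ S := S.min'_mem hS
  set L : ℤ := M - m with hLdef
  have hL0 : 0 ≤ L := sub_nonneg.2 (S.min'_le M hM)
  have negself : ∀ a : ZMod 2, -a = a := by decide
  have h' : ∀ t : ℤ, ∑ n ∈ S, χ (n + t) = 0 := by
    intro t; have := h (-t); simpa [sub_neg_eq_add] using this
  have recM : ∀ t : ℤ, χ (M + t) = ∑ n ∈ S.erase M, χ (n + t) := by
    intro t
    have h1 := h' t
    rw [← Finset.add_sum_erase S _ hM] at h1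
    have h2 := eq_neg_of_add_eq_zero_left h1
    rw [negself] at h2; exact h2
  have recm : ∀ t : ℤ, χ (m + t) = ∑ n ∈ S.erase m, χ (n + t) := by
    intro t
    have h1 := h' t
    rw [← Finset.add_sum_erase S _ hm] at h1
    have h2 := eq_neg_of_add_eq_zero_left h1
    rw [negself] at h2; exact h2
  -- pigeonhole on windows
  let W : ℤ → (Fin (L.toNat + 1) → ZMod 2) := fun k j => χ (k + (j : ℤ))
  obtain ⟨a, b, hab, hWab⟩ := Finite.exists_ne_map_eq_of_infinite W
  wlog hlt : a < b generalizing a b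
  · exact this b a hab.symm hWab.symm (by omega)
  refine ⟨b - a, by omega, ?_⟩
  set p : ℤ := b - a with hpdef
  -- window predicate
  set P : ℤ → Prop := fun k => ∀ j : ℤ, 0 ≤ j → j ≤ L → χ (k + j + p) = χ (k + j) with hPdef
  have hPa : P a := by
    intro j hj0 hjL
    have hjn : j.toNat < L.toNat + 1 := by omega
    have := congrFun hWab ⟨j.toNat, hjn⟩
    simp only [W] at this
    rw [Int.toNat_of_nonneg hj0] at this
    rw [show a + j + p = b + j by omega]
    exact this.symm
  have step_up : ∀ k : ℤ, P k → P (k + 1) := by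
    intro k hk j hj0 hjL
    rcases lt_or_eq_of_le hjL with hjlt | hjeq
    · have := hk (j + 1) (by omega) (by omega)
      rw [show k + 1 + j + p = k + (j + 1) + p by ring, show k + 1 + j = k + (j + 1) by ring]
      exact this
    · subst hjeq
      have e1 : k + 1 + L + p = M + (k + 1 - m + p) := by omega
      have e2 : k + 1 + L = M + (k + 1 - m) := by omega
      rw [e1, e2, recM, recM]
      apply Finset.sum_congr rfl
      intro n hn
      obtain ⟨hnM, hnS⟩ := Finset.mem_erase.mp hn
      have hnle : n ≤ M := S.le_max' n hnS
      have hnge : m ≤ n := S.min'_le n hnS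
      have := hk (n + 1 - m) (by omega) (by omega)
      rw [show n + (k + 1 - m + p) = k + (n + 1 - m) + p by ring,
          show n + (k + 1 - m) = k + (n + 1 - m) by ring]
      exact this
  have step_down : ∀ k : ℤ, P k → P (k - 1) := by
    intro k hk j hj0 hjL
    rcases eq_or_lt_of_le hj0 with hjeq | hjgt
    · subst hjeq
      have e1 : k - 1 + 0 + p = m + (k - 1 - m + p) := by omega
      have e2 : k - 1 + 0 = m + (k - 1 - m) := by omega
      rw [e1, e2, recm, recm]
      apply Finset.sum_congr rfl
      intro n hn
      obtain ⟨hnm, hnS⟩ := Finset.mem_erase.mp hn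
      have hnle : n ≤ M := S.le_max' n hnS
      have hnge : m ≤ n := S.min'_le n hnS
      have := hk (n - m - 1) (by omega) (by omega)
      rw [show n + (k - 1 - m + p) = k + (n - m - 1) + p by ring,
          show n + (k - 1 - m) = k + (n - m - 1) by ring]
      exact this
    · have := hk (j - 1) (by omega) (by omega)
      rw [show k - 1 + j + p = k + (j - 1) + p by ring, show k - 1 + j = k + (j - 1) by ring]
      exact this
  have hall : ∀ d : ℤ, P (a + d) := by
    intro d
    induction d using Int.induction_on with
    | zero => simpa using hPa
    | succ i ih =>
        have := step_up (a + i) ih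
        rwa [show a + (i + 1 : ℤ) = a + i + 1 by ring]
    | pred i ih =>
        have := step_down (a + (-i : ℤ)) ih
        rwa [show (a + (-(i:ℤ) - 1)) = a + -(i:ℤ) - 1 by ring]
  intro n
  have := hall (n - a) 0 le_rfl hL0
  simpa using this
end

section
/- With the setup of the previous statement (short exact sequence 1 → F → G →τ Q → 1, F finite, T = T⁻¹ a finite generating set of Q, S = τ⁻¹(T) ∪ F), define the conjugacy length ‖[g]‖_S = min{‖h‖_S : h conjugate to g in G}. Then for every g ∈ G \ F, ‖[g]‖_S = ‖[τ(g)]‖_T. -/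
/-- Word length of `g` with respect to a (symmetric) subset `S`. -/
noncomputable def wordLength {G : Type*} [Group G] (S : Set G) (g : G) : ℕ :=
  sInf {n | ∃ l : List G, l.length = n ∧ (∀ x ∈ l, x ∈ S) ∧ l.prod = g}

/-- Conjugacy length: the minimal word length over the conjugacy class. -/
noncomputable def conjLength {G : Type*} [Group G] (S : Set G) (g : G) : ℕ :=
  sInf (wordLength S '' {x | IsConj g x})

section Aux

variable {G Q : Type*} [Group G] [Group Q]

private lemma conj_ne_one {Q : Type*} [Group Q] {c a : Q} (h : a ≠ 1) :
    c * a * c⁻¹ ≠ 1 := by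
  intro h1
  apply h
  rwa [mul_inv_eq_one, mul_eq_left] at h1

/-- Push a word over `S` down to a word over `T` of no greater length. -/
private lemma push_word (τ : G →* Q) (T : Set Q) (S : Set G)
    (hS : S = τ ⁻¹' T ∪ (τ.ker : Set G)) :
    ∀ l : List G, (∀ x ∈ l, x ∈ S) →
      ∃ l' : List Q, l'.length ≤ l.length ∧ (∀ y ∈ l', y ∈ T) ∧ l'.prod = τ l.prod := by
  intro l
  induction l with
  | nil => exact fun _ => ⟨[], by simp, by simp, by simp⟩
  | cons x xs ih =>
    intro h
    obtain ⟨l', hlen, hmem, hprod⟩ := ih (fun y hy => h y (List.mem_cons_of_mem _ hy))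
    have hx := h x List.mem_cons_self
    rw [hS] at hx
    rcases hx with hx | hx
    · refine ⟨τ x :: l', by simpa using Nat.succ_le_succ hlen, ?_, by simp [hprod]⟩
      intro y hy
      rcases List.mem_cons.1 hy with rfl | hy
      · exact hx
      · exact hmem y hy
    · have hx1 : τ x = 1 := hx
      exact ⟨l', le_trans hlen (Nat.le_succ _), hmem, by simp [hprod, hx1]⟩

/-- Lift a nonempty word over `T` to a word over `S` of the same length. -/
private lemma lift_word (τ : G →* Q) (hsurj : Function.Surjective τ)
    (T : Set Q) (S : Set G) (hS : S = τ ⁻¹' T ∪ (τ.ker : Set G))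
    (g : G) (l' : List Q) (hne : l' ≠ []) (hmemT : ∀ y ∈ l', y ∈ T)
    (hprod : l'.prod = τ g) :
    ∃ l : List G, l.length = l'.length ∧ (∀ x ∈ l, x ∈ S) ∧ l.prod = g := by
  set φ := Function.surjInv hsurj with hφ
  have hφτ : ∀ q, τ (φ q) = q := Function.surjInv_eq hsurj
  set m := l'.dropLast.map φ with hm
  have hmprod : τ m.prod = l'.dropLast.prod := by
    rw [hm, map_list_prod, List.map_map]
    congr 1
    simp [Function.comp_def, hφτ]
  have hsplit : l'.dropLast.prod * l'.getLast hne = l'.prod := by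
    conv_rhs => rw [← List.dropLast_append_getLast hne]
    simp
  refine ⟨m ++ [m.prod⁻¹ * g], ?_, ?_, ?_⟩
  · have h1 : 1 ≤ l'.length := by
      rcases l' with _ | _
      · exact absurd rfl hne
      · simp
    simp only [List.length_append, hm, List.length_map, List.length_dropLast,
      List.length_singleton]
    omega
  · intro x hx
    rcases List.mem_append.1 hx with hx | hx
    · rw [hm] at hx
      obtain ⟨q, hq, rfl⟩ := List.mem_map.1 hx
      rw [hS]
      left
      show τ (φ q) ∈ T
      rw [hφτ]
      exact hmemT q (List.dropLast_subset _ hq)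
    · have hx' : x = m.prod⁻¹ * g := by simpa using hx
      rw [hS]
      left
      show τ x ∈ T
      have : τ x = l'.getLast hne := by
        rw [hx', map_mul, map_inv, hmprod, ← hprod, inv_mul_eq_iff_eq_mul]
        exact hsplit.symm
      rw [this]
      exact hmemT _ (List.getLast_mem hne)
  · simp

/-- Every element of `Q` is a product of a word over `T`. -/
private lemma exists_word (T : Set Q) (hTsym : T⁻¹ = T)
    (hTgen : Subgroup.closure T = ⊤) (q : Q) :
    ∃ l : List Q, (∀ y ∈ l, y ∈ T) ∧ l.prod = q := by
  have hq : q ∈ (Subgroup.closure T).toSubmonoid := by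
    rw [hTgen]; trivial
  rw [Subgroup.closure_toSubmonoid, Set.union_comm, hTsym, Set.union_self] at hq
  exact Submonoid.exists_list_of_mem_closure hq

/-- The key word-length equality for elements outside the kernel. -/
private lemma wl_eq (τ : G →* Q) (hsurj : Function.Surjective τ)
    (T : Set Q) (hTsym : T⁻¹ = T) (hTgen : Subgroup.closure T = ⊤)
    (S : Set G) (hS : S = τ ⁻¹' T ∪ (τ.ker : Set G))
    (g : G) (hg : g ∉ τ.ker) :
    wordLength S g = wordLength T (τ g) := by
  have hτg : τ g ≠ 1 := fun h => hg (MonoidHom.mem_ker.mpr h)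
  obtain ⟨l₀, hl₀T, hl₀p⟩ := exists_word T hTsym hTgen (τ g)
  have hl₀ne : l₀ ≠ [] := by
    rintro rfl
    exact hτg hl₀p.symm
  have hB : {n | ∃ l : List Q, l.length = n ∧ (∀ x ∈ l, x ∈ T) ∧ l.prod = τ g}.Nonempty :=
    ⟨l₀.length, l₀, rfl, hl₀T, hl₀p⟩
  have hA : {n | ∃ l : List G, l.length = n ∧ (∀ x ∈ l, x ∈ S) ∧ l.prod = g}.Nonempty := by
    obtain ⟨l, hlen, hlS, hlp⟩ := lift_word τ hsurj T S hS g l₀ hl₀ne hl₀T hl₀p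
    exact ⟨l.length, l, rfl, hlS, hlp⟩
  apply le_antisymm
  · obtain ⟨l', hlen, hl'T, hl'p⟩ := Nat.sInf_mem hB
    have hl'ne : l' ≠ [] := by
      rintro rfl
      exact hτg hl'p.symm
    obtain ⟨l, hleq, hlS, hlp⟩ := lift_word τ hsurj T S hS g l' hl'ne hl'T hl'p
    exact Nat.sInf_le ⟨l, hleq.trans hlen, hlS, hlp⟩
  · obtain ⟨l, hlen, hlS, hlp⟩ := Nat.sInf_mem hA
    obtain ⟨l', hle, hl'T, hl'p⟩ := push_word τ T S hS l hlS
    calc wordLength T (τ g) ≤ l'.length :=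
          Nat.sInf_le ⟨l', rfl, hl'T, by rw [hl'p, hlp]⟩
      _ ≤ l.length := hle
      _ = _ := hlen

end Aux

theorem stmt_6 {G Q : Type*} [Group G] [Group Q] (τ : G →* Q)
    (hsurj : Function.Surjective τ) (hF : Finite τ.ker)
    (T : Set Q) (hTfin : T.Finite) (hTsym : T⁻¹ = T)
    (hTgen : Subgroup.closure T = ⊤)
    (S : Set G) (hS : S = τ ⁻¹' T ∪ (τ.ker : Set G)) :
    ∀ g : G, g ∉ τ.ker → conjLength S g = conjLength T (τ g) := by
  intro g hg
  have hτg : τ g ≠ 1 := fun h => hg (MonoidHom.mem_ker.mpr h)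
  apply le_antisymm
  · -- conjLength S g ≤ conjLength T (τ g)
    have hne : (wordLength T '' {q | IsConj (τ g) q}).Nonempty :=
      ⟨wordLength T (τ g), τ g, IsConj.refl _, rfl⟩
    obtain ⟨q, hq, hwq⟩ := Nat.sInf_mem hne
    obtain ⟨c, hc⟩ := isConj_iff.1 hq
    obtain ⟨c', rfl⟩ := hsurj c
    set x := c' * g * c'⁻¹ with hx
    have hτx : τ x = q := by simp [hx, ← hc]
    have hxker : x ∉ τ.ker := by
      intro hmem
      have h1 : τ x = 1 := hmem
      rw [hτx] at h1
      rw [h1] at hc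
      exact conj_ne_one hτg hc
    have hconj : IsConj g x := isConj_iff.2 ⟨c', rfl⟩
    calc conjLength S g ≤ wordLength S x := Nat.sInf_le ⟨x, hconj, rfl⟩
      _ = wordLength T (τ x) := wl_eq τ hsurj T hTsym hTgen S hS x hxker
      _ = wordLength T q := by rw [hτx]
      _ = conjLength T (τ g) := hwq
  · have hne : (wordLength S '' {x | IsConj g x}).Nonempty :=
      ⟨wordLength S g, g, IsConj.refl _, rfl⟩
    obtain ⟨x, hx, hwx⟩ := Nat.sInf_mem hne
    have hxker : x ∉ τ.ker := by
      intro hmem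
      obtain ⟨c, hc⟩ := isConj_iff.1 hx
      have h1 : τ x = 1 := hmem
      rw [← hc] at h1
      simp only [map_mul, map_inv] at h1
      exact conj_ne_one hτg h1
    calc conjLength T (τ g) ≤ wordLength T (τ x) :=
          Nat.sInf_le ⟨τ x, τ.map_isConj hx, rfl⟩
      _ = wordLength S x := (wl_eq τ hsurj T hTsym hTgen S hS x hxker).symm
      _ = conjLength S g := hwx
end
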